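/- Let α ∈ (0,1), λ > 0, and let p > 0 be a real number with p^α > λ. Then the Laplace transform of t ↦ E_α(−λ t^α) is ∫_0^∞ e^{−pt} E_α(−λ t^α) dt = p^{α−1}/(p^α + λ), where E_α(z) = Σ_{k=0}^∞ z^k/Γ(αk+1) is the Mittag–Leffler function. -/

import Mathlib

open Set MeasureTheory Real

/-- Laplace transform of the Mittag–Leffler function `t ↦ E_α(−λ t^α)`:
`∫_0^∞ e^{−pt} E_α(−λ t^α) dt = p^{α−1}/(p^α + λ)` for `p > 0` with `p^α > λ`. -/
theorem laplace_mittag_leffler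
    (α lam p : ℝ) (hα : α ∈ Set.Ioo (0 : ℝ) 1) (hlam : 0 < lam)
    (hp : 0 < p) (hpα : lam < p ^ α)
    (E : ℝ → ℝ) (hE : ∀ z : ℝ, E z = ∑' k : ℕ, z ^ k / Real.Gamma (α * k + 1)) :
    ∫ t in Set.Ioi (0 : ℝ), Real.exp (-p * t) * E (-lam * t ^ α)
      = p ^ (α - 1) / (p ^ α + lam) := by
  obtain ⟨hα0, hα1⟩ := hα
  have hΓ : ∀ k : ℕ, 0 < Real.Gamma (α * k + 1) := fun k =>
    Real.Gamma_pos_of_pos (by positivity)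
  set F : ℕ → ℝ → ℝ := fun k t =>
    Real.exp (-p * t) * ((-lam * t ^ α) ^ k / Real.Gamma (α * k + 1)) with hF
  -- base integrability
  have hint : ∀ k : ℕ, IntegrableOn (fun t : ℝ => Real.exp (-p * t) * t ^ (α * k)) (Ioi 0) := by
    intro k
    have h := integrableOn_rpow_mul_exp_neg_mul_rpow (s := α * k) (p := 1) (b := p)
      (lt_of_lt_of_le neg_one_lt_zero (by positivity)) zero_lt_one hp
    simp only [Real.rpow_one] at h
    exact h.congr_fun (fun t ht => mul_comm _ _) measurableSet_Ioi
  -- base integral value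
  have hbase : ∀ k : ℕ, ∫ t in Ioi (0:ℝ), Real.exp (-p * t) * t ^ (α * k)
      = (1 / p) ^ (α * k + 1) * Real.Gamma (α * k + 1) := by
    intro k
    rw [← Real.integral_rpow_mul_exp_neg_mul_Ioi (a := α * k + 1) (r := p) (by positivity) hp]
    refine setIntegral_congr_fun measurableSet_Ioi fun t ht => ?_
    rw [add_sub_cancel_right, neg_mul, mul_comm]
  -- pointwise rewriting of F on Ioi 0
  have hFeq : ∀ k : ℕ, ∀ t ∈ Ioi (0:ℝ),
      F k t = ((-lam) ^ k / Real.Gamma (α * k + 1)) * (Real.exp (-p * t) * t ^ (α * k)) := by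
    intro k t ht
    have ht0 : (0:ℝ) ≤ t := le_of_lt ht
    have : (t ^ α) ^ k = t ^ (α * k) := by
      rw [← Real.rpow_natCast (t ^ α) k, ← Real.rpow_mul ht0]
    simp only [hF, mul_pow, this]
    ring
  -- integrability of each F k
  have hFint : ∀ k : ℕ, IntegrableOn (F k) (Ioi 0) := by
    intro k
    exact IntegrableOn.congr_fun ((hint k).const_mul ((-lam) ^ k / Real.Gamma (α * k + 1)))
      (fun t ht => (hFeq k t ht).symm) measurableSet_Ioi
  -- value of each integral
  have hFval : ∀ k : ℕ, ∫ t in Ioi (0:ℝ), F k t = (-lam) ^ k * (1 / p) ^ (α * k + 1) := by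
    intro k
    rw [setIntegral_congr_fun measurableSet_Ioi (hFeq k), integral_const_mul, hbase k]
    field_simp
  -- norm integrals
  have hFnorm : ∀ k : ℕ, ∫ t in Ioi (0:ℝ), ‖F k t‖ = lam ^ k * (1 / p) ^ (α * k + 1) := by
    intro k
    have : ∀ t ∈ Ioi (0:ℝ), ‖F k t‖
        = (lam ^ k / Real.Gamma (α * k + 1)) * (Real.exp (-p * t) * t ^ (α * k)) := by
      intro t ht
      rw [hFeq k t ht]
      have ht0 : (0:ℝ) < t := ht
      rw [Real.norm_eq_abs, abs_mul, abs_div, abs_pow, abs_neg, abs_of_pos hlam,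
        abs_of_pos (hΓ k), abs_of_pos (by positivity : (0:ℝ) < Real.exp (-p*t) * t ^ (α*k))]
    rw [setIntegral_congr_fun measurableSet_Ioi this, integral_const_mul, hbase k]
    field_simp
  -- key geometric quantities
  set q : ℝ := (1 / p) ^ α with hq
  have hq0 : 0 < q := by positivity
  have hqe : q = (p ^ α)⁻¹ := by
    rw [hq, one_div, Real.inv_rpow hp.le]
  have hpow : ∀ k : ℕ, (1 / p) ^ (α * k + 1) = (1 / p) * q ^ k := by
    intro k
    rw [Real.rpow_add (by positivity), Real.rpow_one, hq,
      ← Real.rpow_natCast ((1/p) ^ α) k, ← Real.rpow_mul (by positivity)]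
    ring
  have hratio : lam * q < 1 := by
    rw [hqe]
    rw [mul_inv_lt_iff₀ (by positivity), one_mul]
    exact hpα
  -- summability of norm integrals
  have hsum : Summable fun k : ℕ => ∫ t in Ioi (0:ℝ), ‖F k t‖ := by
    simp only [hFnorm, hpow]
    have h2 : ∀ k : ℕ, lam ^ k * ((1 / p) * q ^ k) = (1 / p) * (lam * q) ^ k := by
      intro k; rw [mul_pow]; ring
    simp only [h2]
    exact (summable_geometric_of_lt_one (by positivity) hratio).mul_left _
  -- swap sum and integral
  have hswap : ∑' k : ℕ, ∫ t in Ioi (0:ℝ), F k t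
      = ∫ t in Ioi (0:ℝ), ∑' k : ℕ, F k t :=
    MeasureTheory.integral_tsum_of_summable_integral_norm hFint hsum
  -- the integrand equals the tsum
  have hintegrand : ∀ t : ℝ, Real.exp (-p * t) * E (-lam * t ^ α) = ∑' k : ℕ, F k t := by
    intro t
    rw [hE, ← tsum_mul_left]
  calc ∫ t in Set.Ioi (0 : ℝ), Real.exp (-p * t) * E (-lam * t ^ α)
      = ∫ t in Ioi (0:ℝ), ∑' k : ℕ, F k t := by
        exact setIntegral_congr_fun measurableSet_Ioi fun t _ => hintegrand t
    _ = ∑' k : ℕ, ∫ t in Ioi (0:ℝ), F k t := hswap.symm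
    _ = ∑' k : ℕ, (1 / p) * (-lam * q) ^ k := by
        refine tsum_congr fun k => ?_
        rw [hFval k, hpow k, mul_pow]
        ring
    _ = (1 / p) * (1 - (-lam * q))⁻¹ := by
        rw [tsum_mul_left, tsum_geometric_of_abs_lt_one (by
          rw [abs_mul, abs_neg, abs_of_pos hlam, abs_of_pos hq0]; exact hratio)]
    _ = p ^ (α - 1) / (p ^ α + lam) := by
        have hpα0 : (0:ℝ) < p ^ α := Real.rpow_pos_of_pos hp α
        have h1 : p ^ (α - 1) = p ^ α / p := by
          rw [Real.rpow_sub hp, Real.rpow_one]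
        rw [h1, hqe]
        field_simp
        rw [sub_neg_eq_add]; exact div_self (by positivity)
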